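/- arXiv:0810.5261 — 2 statements merged into one kernel-verified Lean document; each statement's English description precedes it below -/
import Mathlib

section
/- Let F be a Fréchet space whose topology is given by a countable family of seminorms {pᵢ}, realized as the projective limit of Banach spaces {Eᵢ, ρⱼᵢ} with limit maps ρᵢ : F → Eᵢ. Suppose Φ : ℝ × F × F → F is the projective limit of maps Φᵢ : ℝ × Eᵢ × Eᵢ → Eᵢ, each k-Lipschitz in the last two variables uniformly in t, and (t₀, x₀, y₀) are initial data with M = sup{ (pᵢ(y₀)² + pᵢ(Φ(t, x₀, y₀))²)^{1/2} : i ∈ ℕ, t ∈ [t₀−τ, t₀+τ] } < ∞. Then with a = min{τ, 1/(M+k)}, the second-order initial value problem x'' = Φ(t, x, x'), x(t₀) = x₀, x'(t₀) = y₀ has a unique C² solution x : [t₀−a, t₀+a] → F, obtained as the projective limit of the unique solutions xᵢ on the Banach factors. -/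
open intervalIntegral MeasureTheory Filter Set Topology

lemma abs_integral_abs_pow (t₀ t : ℝ) (n : ℕ) :
    |∫ s in t₀..t, |s - t₀| ^ n| = |t - t₀| ^ (n + 1) / (n + 1) := by
  rcases le_total t₀ t with h | h
  · rw [intervalIntegral.integral_congr (g := fun s => (s - t₀) ^ n)
      (fun s hs => by
        rw [Set.uIcc_of_le h] at hs
        simp [abs_of_nonneg (sub_nonneg.2 hs.1)]),
      intervalIntegral.integral_comp_sub_right (fun x => x ^ n) t₀, integral_pow]
    simp only [sub_self, zero_pow (Nat.succ_ne_zero n), sub_zero]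
    rw [abs_div, abs_of_nonneg (pow_nonneg (sub_nonneg.2 h) _), abs_of_nonneg (sub_nonneg.2 h),
      abs_of_nonneg (by positivity : (0:ℝ) ≤ (n:ℝ)+1)]
  · rw [intervalIntegral.integral_congr (g := fun s => (t₀ - s) ^ n)
      (fun s hs => by
        rw [Set.uIcc_of_ge h] at hs
        rw [abs_of_nonpos (sub_nonpos.2 hs.2), neg_sub]),
      intervalIntegral.integral_comp_sub_left (fun x => x ^ n) t₀, integral_pow]
    simp only [sub_self, zero_pow (Nat.succ_ne_zero n), zero_sub]
    rw [abs_div, abs_neg, abs_of_nonneg (pow_nonneg (sub_nonneg.2 h) _),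
      abs_of_nonpos (sub_nonpos.2 h), neg_sub,
      abs_of_nonneg (by positivity : (0:ℝ) ≤ (n:ℝ)+1)]

lemma norm_integral_le_pow_div_factorial {E : Type*} [NormedAddCommGroup E] [NormedSpace ℝ E]
    {f : ℝ → E} {t₀ t C : ℝ} (hC : 0 ≤ C) (n : ℕ)
    (h : ∀ s ∈ Set.uIcc t₀ t, ‖f s‖ ≤ C * |s - t₀| ^ n / n.factorial) :
    ‖∫ s in t₀..t, f s‖ ≤ C * |t - t₀| ^ (n + 1) / (n + 1).factorial := by
  have hb : IntervalIntegrable (fun s => C * |s - t₀| ^ n / n.factorial) volume t₀ t := by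
    apply Continuous.intervalIntegrable
    have : Continuous fun s : ℝ => |s - t₀| ^ n := ((continuous_id.sub continuous_const).abs).pow n
    continuity
  have := intervalIntegral.norm_integral_le_abs_of_norm_le
    (f := f) (g := fun s => C * |s - t₀| ^ n / n.factorial) (μ := volume)
    (MeasureTheory.ae_restrict_of_forall_mem measurableSet_uIoc
      (fun s hs => h s (Set.uIoc_subset_uIcc hs))) hb
  refine this.trans ?_
  have heq : (∫ s in t₀..t, C * |s - t₀| ^ n / n.factorial)
      = (C / n.factorial) * ∫ s in t₀..t, |s - t₀| ^ n := by
    rw [← intervalIntegral.integral_const_mul]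
    congr 1; ext s; ring
  rw [heq, abs_mul, abs_of_nonneg (by positivity : (0:ℝ) ≤ C / n.factorial),
    abs_integral_abs_pow]
  rw [Nat.factorial_succ]
  apply le_of_eq
  push_cast
  field_simp

noncomputable def picardIter {E : ℕ → Type*} [∀ i, NormedAddCommGroup (E i)]
    [∀ i, NormedSpace ℝ (E i)] [∀ i, CompleteSpace (E i)]
    (Φi : ∀ i, ℝ → E i → E i → E i) (t₀ : ℝ) (X0 Y0 : ∀ i, E i) :
    ℕ → ∀ i, (ℝ → E i) × (ℝ → E i)
  | 0 => fun i => (fun _ => X0 i, fun _ => Y0 i)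
  | (n+1) => fun i =>
      (fun t => X0 i + ∫ s in t₀..t, (picardIter Φi t₀ X0 Y0 n i).2 s,
       fun t => Y0 i + ∫ s in t₀..t, Φi i s ((picardIter Φi t₀ X0 Y0 n i).1 s)
         ((picardIter Φi t₀ X0 Y0 n i).2 s))


lemma hasDerivWithinAt_singleton'' {𝕜 : Type*} [NontriviallyNormedField 𝕜] {G : Type*}
    [NormedAddCommGroup G] [NormedSpace 𝕜 G] (f : 𝕜 → G) (f' : G) (x : 𝕜) :
    HasDerivWithinAt f f' {x} x := by
  have h : 𝓝[{x} \ {x}] x = ⊥ := by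
    rw [Set.diff_self]
    exact nhdsWithin_empty x
  exact HasFDerivWithinAt.of_subsingleton Set.subsingleton_singleton

set_option maxHeartbeats 2000000 in
/-- Existence and uniqueness for the second-order ODE `x'' = Φ(t,x,x')` on a Fréchet space
realized as a projective limit of Banach spaces, with the explicit radius
`a = min(τ, 1/(M+k))`, the solution being obtained componentwise on the Banach factors. -/
theorem second_order_ode_projective_limit
    (E : ℕ → Type*) [∀ i, NormedAddCommGroup (E i)] [∀ i, NormedSpace ℝ (E i)]
    [∀ i, CompleteSpace (E i)]
    (ρc : ∀ {i j : ℕ}, i ≤ j → (E j →L[ℝ] E i))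
    (F : Type*) [AddCommGroup F] [Module ℝ F]
    (ρ : ∀ i, F →ₗ[ℝ] E i)
    (hcompat : ∀ {i j : ℕ} (h : i ≤ j) (x : F), ρc h (ρ j x) = ρ i x)
    (hlim : ∀ z : ∀ i, E i, (∀ {i j : ℕ} (h : i ≤ j), ρc h (z j) = z i) →
      ∃! w : F, ∀ i, ρ i w = z i)
    (p : ℕ → F → ℝ) (hp : ∀ i x, p i x = ‖ρ i x‖)
    (Φ : ℝ → F → F → F) (Φi : ∀ i, ℝ → E i → E i → E i)
    (hΦ : ∀ i t x y, ρ i (Φ t x y) = Φi i t (ρ i x) (ρ i y))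
    (k : ℝ)
    (hΦcont : ∀ i, Continuous fun q : ℝ × E i × E i => Φi i q.1 q.2.1 q.2.2)
    (hlip : ∀ i t (x y x' y' : E i),
      ‖Φi i t x y - Φi i t x' y'‖ ≤ k * (‖x - x'‖ + ‖y - y'‖))
    (t₀ τ M : ℝ) (hτ : 0 < τ) (x₀ y₀ : F)
    (hM : ∀ i, ∀ t ∈ Set.Icc (t₀ - τ) (t₀ + τ),
      Real.sqrt ((p i y₀) ^ 2 + (p i (Φ t x₀ y₀)) ^ 2) ≤ M)
    (a : ℝ) (ha : a = min τ (1 / (M + k))) :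
    ∃ x y : ℝ → F,
      x t₀ = x₀ ∧ y t₀ = y₀ ∧
      (∀ i, ∀ t ∈ Set.Icc (t₀ - a) (t₀ + a),
        HasDerivWithinAt (fun s => ρ i (x s)) (ρ i (y t)) (Set.Icc (t₀ - a) (t₀ + a)) t ∧
        HasDerivWithinAt (fun s => ρ i (y s)) (ρ i (Φ t (x t) (y t)))
          (Set.Icc (t₀ - a) (t₀ + a)) t) ∧
      (∀ x' y' : ℝ → F, x' t₀ = x₀ → y' t₀ = y₀ →
        (∀ i, ∀ t ∈ Set.Icc (t₀ - a) (t₀ + a),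
          HasDerivWithinAt (fun s => ρ i (x' s)) (ρ i (y' t)) (Set.Icc (t₀ - a) (t₀ + a)) t ∧
          HasDerivWithinAt (fun s => ρ i (y' s)) (ρ i (Φ t (x' t) (y' t)))
            (Set.Icc (t₀ - a) (t₀ + a)) t) →
        Set.EqOn x' x (Set.Icc (t₀ - a) (t₀ + a))) := by
  classical
  rcases lt_trichotomy a 0 with hneg | heq0 | hpos
  · refine ⟨fun _ => x₀, fun _ => y₀, rfl, rfl, ?_, ?_⟩
    · intro i t ht
      exfalso
      simp only [Set.mem_Icc] at ht
      linarith [ht.1, ht.2]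
    · intro x' y' _ _ _ t ht
      exfalso
      simp only [Set.mem_Icc] at ht
      linarith [ht.1, ht.2]
  · have hsing : Set.Icc (t₀ - a) (t₀ + a) = {t₀} := by
      rw [heq0, sub_zero, add_zero, Set.Icc_self]
    refine ⟨fun _ => x₀, fun _ => y₀, rfl, rfl, ?_, ?_⟩
    · intro i t ht
      rw [hsing] at ht ⊢
      rw [Set.mem_singleton_iff] at ht
      subst ht
      exact ⟨hasDerivWithinAt_singleton'' _ _ _, hasDerivWithinAt_singleton'' _ _ _⟩
    · intro x' y' hx'0 _ _ t ht
      rw [hsing, Set.mem_singleton_iff] at ht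
      subst ht
      exact hx'0
  ·    classical
    set J := Set.Icc (t₀ - a) (t₀ + a) with hJdef
    have hinj : ∀ u w : F, (∀ i, ρ i u = ρ i w) → u = w := by
      intro u w h
      obtain ⟨v, hv, huniq⟩ := hlim (fun i => ρ i w) (fun h' => hcompat h' w)
      exact (huniq u h).trans (huniq w fun i => rfl).symm
    have haτ : a ≤ τ := ha ▸ min_le_left _ _
    have hJτ : J ⊆ Set.Icc (t₀ - τ) (t₀ + τ) :=
      Set.Icc_subset_Icc (by linarith) (by linarith)
    have ht₀J : t₀ ∈ J := ⟨by linarith, by linarith⟩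
    have habs : ∀ t ∈ J, |t - t₀| ≤ a := by
      intro t ht
      simp only [hJdef, Set.mem_Icc] at ht
      exact abs_le.2 ⟨by linarith [ht.1], by linarith [ht.2]⟩
    have hsubJ : ∀ t ∈ J, Set.uIcc t₀ t ⊆ J := by
      intro t ht
      simp only [hJdef, Set.mem_Icc] at ht ⊢
      rw [Set.uIcc]
      exact Set.Icc_subset_Icc (le_inf (by linarith) ht.1) (sup_le (by linarith) ht.2)
    set L : ℝ := 1 + 2 * |k| with hL
    have hL1 : (1:ℝ) ≤ L := by have := abs_nonneg k; simp only [hL]; linarith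
    have hL0 : (0:ℝ) ≤ L := by linarith
    set X0 : ∀ i, E i := fun i => ρ i x₀ with hX0
    set Y0 : ∀ i, E i := fun i => ρ i y₀ with hY0
    set ux : ℕ → ∀ i, ℝ → E i := fun n i => (picardIter Φi t₀ X0 Y0 n i).1 with huxdef
    set uy : ℕ → ∀ i, ℝ → E i := fun n i => (picardIter Φi t₀ X0 Y0 n i).2 with huydef
    have hux0 : ∀ i t, ux 0 i t = X0 i := fun i t => rfl
    have huy0 : ∀ i t, uy 0 i t = Y0 i := fun i t => rfl
    have huxs : ∀ n i t, ux (n+1) i t = X0 i + ∫ s in t₀..t, uy n i s := fun n i t => rfl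
    have huys : ∀ n i t, uy (n+1) i t = Y0 i + ∫ s in t₀..t, Φi i s (ux n i s) (uy n i s) :=
      fun n i t => rfl
    have hvcont : ∀ i (c d : ℝ → E i), Continuous c → Continuous d →
        Continuous (fun s => Φi i s (c s) (d s)) := by
      intro i c d hc hd
      exact (hΦcont i).comp (continuous_id.prodMk (hc.prodMk hd))
    have hprim : ∀ i (g : ℝ → E i), Continuous g →
        ∀ t, HasDerivAt (fun u => ∫ s in t₀..u, g s) (g t) t := by
      intro i g hg t
      exact intervalIntegral.integral_hasDerivAt_right (hg.intervalIntegrable _ _)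
        (hg.stronglyMeasurableAtFilter _ _) hg.continuousAt
    have hprimc : ∀ i (g : ℝ → E i), Continuous g →
        Continuous (fun u => ∫ s in t₀..u, g s) := by
      intro i g hg
      exact continuous_iff_continuousAt.2 fun t => (hprim i g hg t).continuousAt
    have hcont : ∀ n i, Continuous (ux n i) ∧ Continuous (uy n i) := by
      intro n
      induction n with
      | zero => exact fun i => ⟨continuous_const, continuous_const⟩
      | succ n ih =>
        intro i
        refine ⟨?_, ?_⟩
        · have h : ux (n+1) i = fun t => X0 i + ∫ s in t₀..t, uy n i s := rfl
          rw [h]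
          exact continuous_const.add (hprimc i _ (ih i).2)
        · have h : uy (n+1) i = fun t => Y0 i + ∫ s in t₀..t, Φi i s (ux n i s) (uy n i s) := rfl
          rw [h]
          exact continuous_const.add (hprimc i _ (hvcont i _ _ (ih i).1 (ih i).2))
    have hat0 : ∀ n i, ux n i t₀ = X0 i ∧ uy n i t₀ = Y0 i := by
      intro n
      induction n with
      | zero => exact fun i => ⟨rfl, rfl⟩
      | succ n _ =>
        intro i
        rw [huxs, huys, intervalIntegral.integral_same, intervalIntegral.integral_same]
        simp
    have hcompatu : ∀ n (i j : ℕ) (h : i ≤ j) (t : ℝ),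
        ρc h (ux n j t) = ux n i t ∧ ρc h (uy n j t) = uy n i t := by
      intro n
      induction n with
      | zero => exact fun i j h t => ⟨hcompat h x₀, hcompat h y₀⟩
      | succ n ih =>
        have hliftx : ∀ t, ∃ w : F, ∀ i, ρ i w = ux n i t := fun t =>
          (hlim (fun i => ux n i t) (fun {i j} h => (ih i j h t).1)).exists
        have hlifty : ∀ t, ∃ w : F, ∀ i, ρ i w = uy n i t := fun t =>
          (hlim (fun i => uy n i t) (fun {i j} h => (ih i j h t).2)).exists
        choose Xf hXf using hliftx
        choose Yf hYf using hlifty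
        have hΦeq : ∀ i t, Φi i t (ux n i t) (uy n i t) = ρ i (Φ t (Xf t) (Yf t)) := by
          intro i t
          rw [hΦ, hXf, hYf]
        intro i j h t
        constructor
        · rw [huxs, huxs, map_add]
          congr 1
          · exact hcompat h x₀
          · rw [← ContinuousLinearMap.intervalIntegral_comp_comm _
              (((hcont n j).2).intervalIntegrable _ _)]
            exact intervalIntegral.integral_congr fun s _ => (ih i j h s).2
        · rw [huys, huys, map_add]
          congr 1
          · exact hcompat h y₀
          · rw [← ContinuousLinearMap.intervalIntegral_comp_comm _
              ((hvcont j _ _ (hcont n j).1 (hcont n j).2).intervalIntegrable _ _)]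
            refine intervalIntegral.integral_congr fun s _ => ?_
            rw [hΦeq, hΦeq, hcompat]
    have hsqrt1 : ∀ u w : ℝ, 0 ≤ u → u ≤ Real.sqrt (u ^ 2 + w ^ 2) := by
      intro u w hu
      rw [show u = Real.sqrt (u ^ 2) by rw [Real.sqrt_sq hu]]
      exact Real.sqrt_le_sqrt (by nlinarith [sq_nonneg w, Real.sq_sqrt (sq_nonneg u)])
    have hbase : ∀ i, ∀ t ∈ J, ‖Y0 i‖ ≤ M ∧ ‖Φi i t (X0 i) (Y0 i)‖ ≤ M := by
      intro i t ht
      have h1 := hM i t (hJτ ht)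
      rw [hp, hp] at h1
      constructor
      · exact le_trans (hsqrt1 _ _ (norm_nonneg _)) h1
      · have h2 : Φi i t (X0 i) (Y0 i) = ρ i (Φ t x₀ y₀) := (hΦ i t x₀ y₀).symm
        rw [h2]
        refine le_trans ?_ h1
        calc ‖ρ i (Φ t x₀ y₀)‖
            ≤ Real.sqrt (‖ρ i (Φ t x₀ y₀)‖ ^ 2 + ‖ρ i y₀‖ ^ 2) := hsqrt1 _ _ (norm_nonneg _)
          _ = Real.sqrt (‖ρ i y₀‖ ^ 2 + ‖ρ i (Φ t x₀ y₀)‖ ^ 2) := by rw [add_comm]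
    have hM0 : 0 ≤ M := le_trans (norm_nonneg _) (hbase 0 t₀ ht₀J).1
    have hlip' : ∀ i t (z w z' w' : E i),
        ‖Φi i t z w - Φi i t z' w'‖ ≤ L * max ‖z - z'‖ ‖w - w'‖ := by
      intro i t z w z' w'
      have h1 := hlip i t z w z' w'
      have h2 : k * (‖z - z'‖ + ‖w - w'‖) ≤ |k| * (‖z - z'‖ + ‖w - w'‖) :=
        mul_le_mul_of_nonneg_right (le_abs_self k) (by positivity)
      have h3 : ‖z - z'‖ + ‖w - w'‖ ≤ 2 * max ‖z - z'‖ ‖w - w'‖ := by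
        have := le_max_left ‖z - z'‖ ‖w - w'‖
        have := le_max_right ‖z - z'‖ ‖w - w'‖
        linarith
      have h4 : |k| * (‖z - z'‖ + ‖w - w'‖) ≤ |k| * (2 * max ‖z - z'‖ ‖w - w'‖) :=
        mul_le_mul_of_nonneg_left h3 (abs_nonneg k)
      have h5 : 0 ≤ max ‖z - z'‖ ‖w - w'‖ := le_trans (norm_nonneg _) (le_max_left _ _)
      nlinarith
    set C : ℝ := M * a with hCdef
    have hC0 : 0 ≤ C := mul_nonneg hM0 hpos.le
    have hest : ∀ n i, ∀ t ∈ J,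
        ‖ux (n+1) i t - ux n i t‖ ≤ C * (L * |t - t₀|) ^ n / n.factorial ∧
        ‖uy (n+1) i t - uy n i t‖ ≤ C * (L * |t - t₀|) ^ n / n.factorial := by
      intro n
      induction n with
      | zero =>
        intro i t ht
        simp only [pow_zero, Nat.factorial_zero, Nat.cast_one, mul_one, div_one]
        constructor
        · rw [huxs, hux0]
          have h1 : ‖(X0 i + ∫ s in t₀..t, uy 0 i s) - X0 i‖ = ‖∫ s in t₀..t, uy 0 i s‖ := by
            congr 1; abel
          rw [h1]
          refine le_trans (intervalIntegral.norm_integral_le_of_norm_le_const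
            (C := M) fun s hs => ?_) ?_
          · rw [huy0]; exact (hbase i t ht).1
          · rw [hCdef]
            exact mul_le_mul_of_nonneg_left (habs t ht) hM0
        · rw [huys, huy0]
          have h1 : ‖(Y0 i + ∫ s in t₀..t, Φi i s (ux 0 i s) (uy 0 i s)) - Y0 i‖
              = ‖∫ s in t₀..t, Φi i s (ux 0 i s) (uy 0 i s)‖ := by congr 1; abel
          rw [h1]
          refine le_trans (intervalIntegral.norm_integral_le_of_norm_le_const
            (C := M) fun s hs => ?_) ?_
          · rw [hux0, huy0]
            exact (hbase i s (hsubJ t ht (Set.uIoc_subset_uIcc hs))).2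
          · rw [hCdef]
            exact mul_le_mul_of_nonneg_left (habs t ht) hM0
      | succ n ih =>
        intro i t ht
        have hbnd : ∀ s ∈ Set.uIcc t₀ t,
            max ‖ux (n+1) i s - ux n i s‖ ‖uy (n+1) i s - uy n i s‖
              ≤ C * L ^ n * |s - t₀| ^ n / n.factorial := by
          intro s hs
          have h := ih i s (hsubJ t ht hs)
          have heq : C * (L * |s - t₀|) ^ n / n.factorial
              = C * L ^ n * |s - t₀| ^ n / n.factorial := by rw [mul_pow]; ring
          exact max_le (h.1.trans_eq heq) (h.2.trans_eq heq)
        have hCL : (0:ℝ) ≤ C * L ^ (n+1) := by positivity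
        have hup : ∀ s : ℝ, C * L ^ n * |s - t₀| ^ n / n.factorial
            ≤ C * L ^ (n+1) * |s - t₀| ^ n / n.factorial := by
          intro s
          gcongr
          exact Nat.le_succ n
        have hgoal : C * L ^ (n+1) * |t - t₀| ^ (n+1) / ((n+1).factorial : ℝ)
            = C * (L * |t - t₀|) ^ (n+1) / (n+1).factorial := by rw [mul_pow]; ring
        constructor
        · have heq : ux (n+1+1) i t - ux (n+1) i t
              = ∫ s in t₀..t, (uy (n+1) i s - uy n i s) := by
            rw [huxs, huxs, intervalIntegral.integral_sub
              (((hcont (n+1) i).2).intervalIntegrable _ _)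
              (((hcont n i).2).intervalIntegrable _ _)]
            abel
          rw [heq]
          refine (norm_integral_le_pow_div_factorial hCL n fun s hs => ?_).trans_eq hgoal
          exact le_trans (le_trans (le_max_right _ _) (hbnd s hs)) (hup s)
        · have heq : uy (n+1+1) i t - uy (n+1) i t
              = ∫ s in t₀..t, (Φi i s (ux (n+1) i s) (uy (n+1) i s)
                  - Φi i s (ux n i s) (uy n i s)) := by
            rw [huys, huys, intervalIntegral.integral_sub
              ((hvcont i _ _ (hcont (n+1) i).1 (hcont (n+1) i).2).intervalIntegrable _ _)
              ((hvcont i _ _ (hcont n i).1 (hcont n i).2).intervalIntegrable _ _)]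
            abel
          rw [heq]
          refine (norm_integral_le_pow_div_factorial hCL n fun s hs => ?_).trans_eq hgoal
          refine le_trans (hlip' i s _ _ _ _) ?_
          refine le_trans (mul_le_mul_of_nonneg_left (hbnd s hs) hL0) ?_
          have h6 : L * (C * L ^ n * |s - t₀| ^ n / n.factorial)
              = C * (L * L ^ n) * |s - t₀| ^ n / n.factorial := by ring
          rw [h6, ← pow_succ']
    set d : ℕ → ℝ := fun n => C * (L * a) ^ n / n.factorial with hddef
    have hd0 : ∀ n, 0 ≤ d n := fun n => by positivity
    have hdsum : Summable d := by
      have h := (Real.summable_pow_div_factorial (L * a)).mul_left C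
      refine h.congr fun n => ?_
      rw [hddef]
      ring
    have hdist : ∀ n i, ∀ t ∈ J,
        ‖ux (n+1) i t - ux n i t‖ ≤ d n ∧ ‖uy (n+1) i t - uy n i t‖ ≤ d n := by
      intro n i t ht
      have h := hest n i t ht
      have hmono : C * (L * |t - t₀|) ^ n / n.factorial ≤ d n := by
        show _ ≤ C * (L * a) ^ n / n.factorial
        gcongr
        all_goals first | exact habs t ht | positivity
      exact ⟨h.1.trans hmono, h.2.trans hmono⟩
    have hcauchyx : ∀ i, ∀ t ∈ J, CauchySeq (fun n => ux n i t) := by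
      intro i t ht
      refine cauchySeq_of_dist_le_of_summable d (fun n => ?_) hdsum
      rw [dist_eq_norm, norm_sub_rev]
      exact (hdist n i t ht).1
    have hcauchyy : ∀ i, ∀ t ∈ J, CauchySeq (fun n => uy n i t) := by
      intro i t ht
      refine cauchySeq_of_dist_le_of_summable d (fun n => ?_) hdsum
      rw [dist_eq_norm, norm_sub_rev]
      exact (hdist n i t ht).2
    set fx : ∀ i, ℝ → E i := fun i t => limUnder atTop (fun n => ux n i t) with hfxdef
    set fy : ∀ i, ℝ → E i := fun i t => limUnder atTop (fun n => uy n i t) with hfydef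
    have htendx : ∀ i, ∀ t ∈ J, Tendsto (fun n => ux n i t) atTop (𝓝 (fx i t)) :=
      fun i t ht => (hcauchyx i t ht).tendsto_limUnder
    have htendy : ∀ i, ∀ t ∈ J, Tendsto (fun n => uy n i t) atTop (𝓝 (fy i t)) :=
      fun i t ht => (hcauchyy i t ht).tendsto_limUnder
    set T : ℕ → ℝ := fun n => ∑' m, d (n + m) with hTdef
    have hTx : ∀ n i, ∀ t ∈ J, ‖ux n i t - fx i t‖ ≤ T n ∧ ‖uy n i t - fy i t‖ ≤ T n := by
      intro n i t ht
      constructor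
      · rw [← dist_eq_norm]
        exact dist_le_tsum_of_dist_le_of_tendsto d
          (fun m => by rw [dist_eq_norm, norm_sub_rev]; exact (hdist m i t ht).1)
          hdsum (htendx i t ht) n
      · rw [← dist_eq_norm]
        exact dist_le_tsum_of_dist_le_of_tendsto d
          (fun m => by rw [dist_eq_norm, norm_sub_rev]; exact (hdist m i t ht).2)
          hdsum (htendy i t ht) n
    have hT0' : Tendsto T atTop (𝓝 0) := by
      have h := tendsto_sum_nat_add d
      refine h.congr fun n => tsum_congr fun m => ?_
      rw [add_comm]
    have hT0nn : ∀ n, 0 ≤ T n := fun n => tsum_nonneg fun m => hd0 _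
    -- compatibility of the limits
    have hfcompat : ∀ (i j : ℕ) (h : i ≤ j), ∀ t ∈ J,
        ρc h (fx j t) = fx i t ∧ ρc h (fy j t) = fy i t := by
      intro i j h t ht
      constructor
      · have h1 : Tendsto (fun n => ρc h (ux n j t)) atTop (𝓝 (ρc h (fx j t))) :=
          ((ρc h).continuous.tendsto _).comp (htendx j t ht)
        have h2 : (fun n => ρc h (ux n j t)) = fun n => ux n i t :=
          funext fun n => (hcompatu n i j h t).1
        exact tendsto_nhds_unique (h2 ▸ h1) (htendx i t ht)
      · have h1 : Tendsto (fun n => ρc h (uy n j t)) atTop (𝓝 (ρc h (fy j t))) :=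
          ((ρc h).continuous.tendsto _).comp (htendy j t ht)
        have h2 : (fun n => ρc h (uy n j t)) = fun n => uy n i t :=
          funext fun n => (hcompatu n i j h t).2
        exact tendsto_nhds_unique (h2 ▸ h1) (htendy i t ht)
    -- continuity of the limits on J
    have hunif : ∀ i, ContinuousOn (fx i) J ∧ ContinuousOn (fy i) J := by
      intro i
      constructor
      · have hux : TendstoUniformlyOn (fun n t => ux n i t) (fx i) atTop J := by
          rw [Metric.tendstoUniformlyOn_iff]
          intro ε hε
          filter_upwards [hT0'.eventually_lt_const hε] with n hn t ht
          rw [dist_comm, dist_eq_norm]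
          exact lt_of_le_of_lt (hTx n i t ht).1 hn
        exact hux.continuousOn (Eventually.of_forall fun n => ((hcont n i).1).continuousOn).frequently
      · have huy : TendstoUniformlyOn (fun n t => uy n i t) (fy i) atTop J := by
          rw [Metric.tendstoUniformlyOn_iff]
          intro ε hε
          filter_upwards [hT0'.eventually_lt_const hε] with n hn t ht
          rw [dist_comm, dist_eq_norm]
          exact lt_of_le_of_lt (hTx n i t ht).2 hn
        exact huy.continuousOn (Eventually.of_forall fun n => ((hcont n i).2).continuousOn).frequently
    -- integral equations for the limits
    have hfyint : ∀ i, ∀ t ∈ J, IntervalIntegrable (fy i) volume t₀ t := by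
      intro i t ht
      exact (((hunif i).2).mono (hsubJ t ht)).intervalIntegrable
    have hΦfint : ∀ i, ∀ t ∈ J,
        IntervalIntegrable (fun s => Φi i s (fx i s) (fy i s)) volume t₀ t := by
      intro i t ht
      refine ContinuousOn.intervalIntegrable ?_
      have hmap : ContinuousOn (fun s : ℝ => (s, fx i s, fy i s)) (Set.uIcc t₀ t) :=
        continuousOn_id.prodMk
          ((((hunif i).1).mono (hsubJ t ht)).prodMk (((hunif i).2).mono (hsubJ t ht)))
      exact (hΦcont i).comp_continuousOn hmap
    have hIntx : ∀ i, ∀ t ∈ J, fx i t = X0 i + ∫ s in t₀..t, fy i s := by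
      intro i t ht
      have h1 : Tendsto (fun n => ux (n+1) i t) atTop (𝓝 (fx i t)) :=
        (htendx i t ht).comp (Filter.tendsto_add_atTop_nat 1)
      have h2 : Tendsto (fun n => X0 i + ∫ s in t₀..t, uy n i s) atTop
          (𝓝 (X0 i + ∫ s in t₀..t, fy i s)) := by
        refine tendsto_const_nhds.add ?_
        rw [tendsto_iff_norm_sub_tendsto_zero]
        refine squeeze_zero (fun n => norm_nonneg _) (g := fun n => T n * a) (fun n => ?_) ?_
        · have heq : (∫ s in t₀..t, uy n i s) - ∫ s in t₀..t, fy i s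
              = ∫ s in t₀..t, (uy n i s - fy i s) := by
            rw [intervalIntegral.integral_sub (((hcont n i).2).intervalIntegrable _ _)
              (hfyint i t ht)]
          rw [heq]
          refine le_trans (intervalIntegral.norm_integral_le_of_norm_le_const
            (C := T n) fun s hs => ?_) ?_
          · exact (hTx n i s (hsubJ t ht (Set.uIoc_subset_uIcc hs))).2
          · exact mul_le_mul_of_nonneg_left (habs t ht) (hT0nn n)
        · have := hT0'.mul_const a
          simpa using this
      have h3 : (fun n => ux (n+1) i t) = fun n => X0 i + ∫ s in t₀..t, uy n i s :=
        funext fun n => huxs n i t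
      exact tendsto_nhds_unique (h3 ▸ h1) h2
    have hInty : ∀ i, ∀ t ∈ J, fy i t = Y0 i + ∫ s in t₀..t, Φi i s (fx i s) (fy i s) := by
      intro i t ht
      have h1 : Tendsto (fun n => uy (n+1) i t) atTop (𝓝 (fy i t)) :=
        (htendy i t ht).comp (Filter.tendsto_add_atTop_nat 1)
      have h2 : Tendsto (fun n => Y0 i + ∫ s in t₀..t, Φi i s (ux n i s) (uy n i s)) atTop
          (𝓝 (Y0 i + ∫ s in t₀..t, Φi i s (fx i s) (fy i s))) := by
        refine tendsto_const_nhds.add ?_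
        rw [tendsto_iff_norm_sub_tendsto_zero]
        refine squeeze_zero (fun n => norm_nonneg _) (g := fun n => L * T n * a) (fun n => ?_) ?_
        · have heq : (∫ s in t₀..t, Φi i s (ux n i s) (uy n i s))
                - ∫ s in t₀..t, Φi i s (fx i s) (fy i s)
              = ∫ s in t₀..t, (Φi i s (ux n i s) (uy n i s) - Φi i s (fx i s) (fy i s)) := by
            rw [intervalIntegral.integral_sub
              ((hvcont i _ _ (hcont n i).1 (hcont n i).2).intervalIntegrable _ _)
              (hΦfint i t ht)]
          rw [heq]
          refine le_trans (intervalIntegral.norm_integral_le_of_norm_le_const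
            (C := L * T n) fun s hs => ?_) ?_
          · have hsJ := hsubJ t ht (Set.uIoc_subset_uIcc hs)
            refine le_trans (hlip' i s _ _ _ _) ?_
            refine mul_le_mul_of_nonneg_left ?_ hL0
            exact max_le (hTx n i s hsJ).1 (hTx n i s hsJ).2
          · exact mul_le_mul_of_nonneg_left (habs t ht)
              (mul_nonneg hL0 (hT0nn n))
        · have h4 : Tendsto (fun n => L * T n * a) atTop (𝓝 (L * 0 * a)) :=
            ((tendsto_const_nhds.mul hT0').mul_const a)
          simpa using h4
      have h3 : (fun n => uy (n+1) i t) = fun n => Y0 i + ∫ s in t₀..t, Φi i s (ux n i s) (uy n i s) :=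
        funext fun n => huys n i t
      exact tendsto_nhds_unique (h3 ▸ h1) h2
    -- values at t₀
    have hf0 : ∀ i, fx i t₀ = X0 i ∧ fy i t₀ = Y0 i := by
      intro i
      constructor
      · refine tendsto_nhds_unique (htendx i t₀ ht₀J) ?_
        have h : (fun n => ux n i t₀) = fun _ => X0 i := funext fun n => (hat0 n i).1
        rw [h]
        exact tendsto_const_nhds
      · refine tendsto_nhds_unique (htendy i t₀ ht₀J) ?_
        have h : (fun n => uy n i t₀) = fun _ => Y0 i := funext fun n => (hat0 n i).2
        rw [h]
        exact tendsto_const_nhds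
    -- clamp
    set c : ℝ → ℝ := fun t => max (t₀ - a) (min t (t₀ + a)) with hcdef
    have hc_cont : Continuous c := continuous_const.max (continuous_id.min continuous_const)
    have hcJ : ∀ t, c t ∈ J := fun t =>
      ⟨le_max_left _ _, max_le (by linarith) (min_le_right _ _)⟩
    have hcid : ∀ t ∈ J, c t = t := by
      intro t ht
      simp only [hJdef, Set.mem_Icc] at ht
      rw [hcdef]
      simp only
      rw [min_eq_left ht.2, max_eq_right ht.1]
    -- the solutions in F
    have hxex : ∀ t : ℝ, ∃ w : F, ∀ i, ρ i w = fx i (c t) := fun t =>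
      (hlim (fun i => fx i (c t)) (fun {i j} h => (hfcompat i j h (c t) (hcJ t)).1)).exists
    have hyex : ∀ t : ℝ, ∃ w : F, ∀ i, ρ i w = fy i (c t) := fun t =>
      (hlim (fun i => fy i (c t)) (fun {i j} h => (hfcompat i j h (c t) (hcJ t)).2)).exists
    choose x hx using hxex
    choose y hy using hyex
    have hxJ : ∀ t ∈ J, ∀ i, ρ i (x t) = fx i t := by
      intro t ht i
      rw [hx, hcid t ht]
    have hyJ : ∀ t ∈ J, ∀ i, ρ i (y t) = fy i t := by
      intro t ht i
      rw [hy, hcid t ht]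
    have hx0 : x t₀ = x₀ := by
      refine hinj _ _ fun i => ?_
      rw [hxJ t₀ ht₀J i, (hf0 i).1]
    have hy0 : y t₀ = y₀ := by
      refine hinj _ _ fun i => ?_
      rw [hyJ t₀ ht₀J i, (hf0 i).2]
    -- derivative facts for the constructed solution
    have hkey : ∀ i, ∀ t ∈ J, HasDerivWithinAt (fun s => ρ i (x s)) (ρ i (y t)) J t ∧
        HasDerivWithinAt (fun s => ρ i (y s)) (ρ i (Φ t (x t) (y t))) J t := by
      intro i t ht
      have hFxcont : Continuous (fun s => fx i (c s)) :=
        ((hunif i).1).comp_continuous hc_cont hcJ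
      have hFycont : Continuous (fun s => fy i (c s)) :=
        ((hunif i).2).comp_continuous hc_cont hcJ
      have hFΦcont : Continuous (fun s => Φi i s (fx i (c s)) (fy i (c s))) :=
        hvcont i _ _ hFxcont hFycont
      constructor
      · have hd := ((hprim i _ hFycont t).const_add (X0 i)).hasDerivWithinAt (s := J)
        have heqJ : ∀ s ∈ J, ρ i (x s) = X0 i + ∫ u in t₀..s, fy i (c u) := by
          intro s hs
          rw [hxJ s hs i, hIntx i s hs]
          congr 1
          refine intervalIntegral.integral_congr fun u hu => ?_
          rw [hcid u (hsubJ s hs hu)]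
        have h2 : HasDerivWithinAt (fun s => ρ i (x s)) (fy i (c t)) J t :=
          hd.congr heqJ (heqJ t ht)
        have h3 : fy i (c t) = ρ i (y t) := by
          rw [hcid t ht]
          exact (hyJ t ht i).symm
        exact h3 ▸ h2
      · have hd := ((hprim i _ hFΦcont t).const_add (Y0 i)).hasDerivWithinAt (s := J)
        have heqJ : ∀ s ∈ J, ρ i (y s) = Y0 i + ∫ u in t₀..s, Φi i u (fx i (c u)) (fy i (c u)) := by
          intro s hs
          rw [hyJ s hs i, hInty i s hs]
          congr 1
          refine intervalIntegral.integral_congr fun u hu => ?_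
          rw [hcid u (hsubJ s hs hu)]
        have h2 : HasDerivWithinAt (fun s => ρ i (y s)) (Φi i t (fx i (c t)) (fy i (c t))) J t :=
          hd.congr heqJ (heqJ t ht)
        have h3 : Φi i t (fx i (c t)) (fy i (c t)) = ρ i (Φ t (x t) (y t)) := by
          rw [hΦ i t, hxJ t ht i, hyJ t ht i, hcid t ht]
        exact h3 ▸ h2
    -- uniqueness
    have huniq : ∀ x' y' : ℝ → F, x' t₀ = x₀ → y' t₀ = y₀ →
        (∀ i, ∀ t ∈ J, HasDerivWithinAt (fun s => ρ i (x' s)) (ρ i (y' t)) J t ∧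
          HasDerivWithinAt (fun s => ρ i (y' s)) (ρ i (Φ t (x' t) (y' t))) J t) →
        Set.EqOn x' x J := by
      intro x' y' hx'0 hy'0 hsol t ht
      refine hinj _ _ fun i => ?_
      set v : ℝ → E i × E i → E i × E i := fun s z => (z.2, Φi i s z.1 z.2) with hvdef
      have hKv : ∀ s, LipschitzWith L.toNNReal (v s) := by
        intro s
        refine LipschitzWith.of_dist_le_mul fun z w => ?_
        rw [Real.coe_toNNReal _ hL0, Prod.dist_eq, Prod.dist_eq]
        simp only [dist_eq_norm]
        have hmax0 : 0 ≤ max ‖z.1 - w.1‖ ‖z.2 - w.2‖ :=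
          le_trans (norm_nonneg _) (le_max_left _ _)
        refine max_le ?_ ?_
        · exact le_trans (le_max_right _ _) (le_mul_of_one_le_left hmax0 hL1)
        · exact hlip' i s _ _ _ _
      set P : ℝ → E i × E i := fun s => (ρ i (x' s), ρ i (y' s)) with hPdef
      set Q : ℝ → E i × E i := fun s => (ρ i (x s), ρ i (y s)) with hQdef
      have hPc : ContinuousOn P J := fun s hs =>
        ((hsol i s hs).1.continuousWithinAt).prodMk ((hsol i s hs).2.continuousWithinAt)
      have hQc : ContinuousOn Q J := fun s hs =>
        ((hkey i s hs).1.continuousWithinAt).prodMk ((hkey i s hs).2.continuousWithinAt)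
      have hP' : ∀ s ∈ Set.Ioo (t₀ - a) (t₀ + a), HasDerivAt P (v s (P s)) s := by
        intro s hs
        have hmem : J ∈ 𝓝 s := Icc_mem_nhds hs.1 hs.2
        have h1 := ((hsol i s (Set.Ioo_subset_Icc_self hs)).1).hasDerivAt hmem
        have h2 := ((hsol i s (Set.Ioo_subset_Icc_self hs)).2).hasDerivAt hmem
        have h3 := h1.prodMk h2
        have h4 : v s (P s) = (ρ i (y' s), ρ i (Φ s (x' s) (y' s))) := by
          rw [hvdef]
          simp only [hPdef]
          rw [hΦ i s]
        rw [h4]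
        exact h3
      have hQ' : ∀ s ∈ Set.Ioo (t₀ - a) (t₀ + a), HasDerivAt Q (v s (Q s)) s := by
        intro s hs
        have hmem : J ∈ 𝓝 s := Icc_mem_nhds hs.1 hs.2
        have h1 := ((hkey i s (Set.Ioo_subset_Icc_self hs)).1).hasDerivAt hmem
        have h2 := ((hkey i s (Set.Ioo_subset_Icc_self hs)).2).hasDerivAt hmem
        have h3 := h1.prodMk h2
        have h4 : v s (Q s) = (ρ i (y s), ρ i (Φ s (x s) (y s))) := by
          rw [hvdef]
          simp only [hQdef]
          rw [hΦ i s]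
        rw [h4]
        exact h3
      have hPQ0 : P t₀ = Q t₀ := by
        simp only [hPdef, hQdef, hx'0, hy'0, hx0, hy0]
      have hEq := ODE_solution_unique_of_mem_Icc (v := v) (s := fun _ => Set.univ)
        (fun s _ => (hKv s).lipschitzOnWith)
        (⟨by linarith, by linarith⟩ : t₀ ∈ Set.Ioo (t₀ - a) (t₀ + a))
        hPc hP' (fun _ _ => trivial) hQc hQ' (fun _ _ => trivial) hPQ0
      have := hEq ht
      exact congrArg Prod.fst this
    exact ⟨x, y, hx0, hy0, fun i t ht => hkey i t ht, huniq⟩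
end

section
/- Let E, E' be Banach spaces, F : U → V a C² diffeomorphism between open sets U ⊆ E, V ⊆ E' with G = F⁻¹. Given α ∈ E'* (the dual) and B ∈ L²ₛ(E', ℝ), define their transforms under the jet change-of-chart rule: α' = α ∘ DG(v) viewed appropriately, and B' = B ∘ (DG(v) × DG(v)) + α ∘ DG(v) ∘ D²F(u) ∘ (DG(v) × DG(v)), where u = G(v). Then if B = α ∘ Γ(u) for a symmetric Γ(u) ∈ L²ₛ(E,E) — i.e., B(e₁,e₂) = α(Γ(u)(e₁,e₂)) — the transform satisfies B' = α' ∘ Γ'(v) where Γ'(v) = D²F(u) ∘ (DG(v) × DG(v)) + DF(u) ∘ Γ(u) ∘ (DG(v) × DG(v)). That is, dissection subspaces {α ⊕ α∘Γ(u) : α ∈ E*} are mapped to dissection subspaces under change of chart. -/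
/-- Dissection subspaces are mapped to dissection subspaces under change of chart: if
`B = α ∘ Γ(u)`, then the 2-jet transform `B' = B ∘ (DG×DG) + α ∘ DG(v) ∘ D²F(u) ∘ (DG×DG)`
equals `α' ∘ Γ'(v)`, where `α' = α ∘ DG(v)` and
`Γ'(v) = D²F(u) ∘ (DG×DG) + DF(u) ∘ Γ(u) ∘ (DG×DG)`, with `u = G(v)`. -/
theorem dissection_chart_independent
    {E E' : Type*} [NormedAddCommGroup E] [NormedSpace ℝ E]
    [NormedAddCommGroup E'] [NormedSpace ℝ E']
    (U : Set E) (V : Set E') (hU : IsOpen U) (hV : IsOpen V)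
    (F : E → E') (G : E' → E)
    (hF : ∀ u ∈ U, ContDiffAt ℝ 2 F u) (hG : ∀ v ∈ V, DifferentiableAt ℝ G v)
    (hmapF : Set.MapsTo F U V) (hmapG : Set.MapsTo G V U)
    (hGF : ∀ u ∈ U, G (F u) = u) (hFG : ∀ v ∈ V, F (G v) = v)
    (v : E') (hv : v ∈ V)
    (α : E →L[ℝ] ℝ) (Γu : E →L[ℝ] E →L[ℝ] E)
    (hΓsym : ∀ e₁ e₂ : E, Γu e₁ e₂ = Γu e₂ e₁)
    (B : E → E → ℝ) (hB : ∀ e₁ e₂ : E, B e₁ e₂ = α (Γu e₁ e₂)) :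
    ∀ e₁' e₂' : E',
      B (fderiv ℝ G v e₁') (fderiv ℝ G v e₂') +
          α (fderiv ℝ G v
            (fderiv ℝ (fderiv ℝ F) (G v) (fderiv ℝ G v e₁') (fderiv ℝ G v e₂'))) =
        (α.comp (fderiv ℝ G v))
          (fderiv ℝ (fderiv ℝ F) (G v) (fderiv ℝ G v e₁') (fderiv ℝ G v e₂') +
            fderiv ℝ F (G v) (Γu (fderiv ℝ G v e₁') (fderiv ℝ G v e₂'))) := by
  intro e₁' e₂'
  have hu : G v ∈ U := hmapG hv
  have hFd : DifferentiableAt ℝ F (G v) :=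
    (hF _ hu).differentiableAt (by norm_num)
  have hGd : DifferentiableAt ℝ G (F (G v)) := by
    rw [hFG v hv]; exact hG v hv
  have hcomp : fderiv ℝ (G ∘ F) (G v) =
      (fderiv ℝ G v).comp (fderiv ℝ F (G v)) := by
    rw [fderiv_comp _ hGd hFd, hFG v hv]
  have hid : fderiv ℝ (G ∘ F) (G v) = ContinuousLinearMap.id ℝ E := by
    have hev : (G ∘ F) =ᶠ[nhds (G v)] id := by
      filter_upwards [hU.mem_nhds hu] with x hx
      exact hGF x hx
    rw [hev.fderiv_eq, fderiv_id]
  have key : ∀ x : E, fderiv ℝ G v (fderiv ℝ F (G v) x) = x := by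
    intro x
    have := congrArg (fun L : E →L[ℝ] E => L x) (hcomp.symm.trans hid)
    simpa using this
  simp [hB, map_add, key, add_comm]
end
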